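/- Let X ∈ ℝ^{l×d}, Y ∈ ℝ^{l×o}, W ∈ ℝ^{d×o} be fixed with ‖Xᵀ‖_F² ≤ ζ², ‖XW − Y‖_F² ≤ κ². Let S be a random diagonal l×l matrix with i.i.d. Bernoulli(b/l) diagonal entries, and g(W) = (l/b)·Xᵀ SᵀS (XW − Y). Then E[‖g(W) − Xᵀ(XW − Y)‖_F²] ≤ (l(l−b)/b)·ζ²κ². -/

import Mathlib

open MeasureTheory ProbabilityTheory Matrix

/-- Squared Frobenius norm of a real matrix. -/
def frobSq {n m : ℕ} (A : Matrix (Fin n) (Fin m) ℝ) : ℝ := ∑ i, ∑ j, (A i j) ^ 2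

lemma frobSq_nonneg {n m : ℕ} (A : Matrix (Fin n) (Fin m) ℝ) : 0 ≤ frobSq A :=
  Finset.sum_nonneg fun _ _ => Finset.sum_nonneg fun _ _ => sq_nonneg _

theorem stmt7 {Ω : Type*} [MeasureSpace Ω] [IsProbabilityMeasure (ℙ : Measure Ω)]
    {l d o b : ℕ} (hb : 0 < b) (hbl : b ≤ l)
    (X : Matrix (Fin l) (Fin d) ℝ) (Y : Matrix (Fin l) (Fin o) ℝ)
    (W : Matrix (Fin d) (Fin o) ℝ) (ζ κ : ℝ)
    (hX : frobSq Xᵀ ≤ ζ ^ 2) (hXWY : frobSq (X * W - Y) ≤ κ ^ 2)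
    (S : Ω → Matrix (Fin l) (Fin l) ℝ)
    (hmeas : ∀ i j, Measurable fun ω => S ω i j)
    (hdiag : ∀ ω, ∀ i j, i ≠ j → S ω i j = 0)
    (h01 : ∀ ω j, S ω j j = 0 ∨ S ω j j = 1)
    (hp : ∀ j, ℙ {ω | S ω j j = 1} = ENNReal.ofReal ((b : ℝ) / l))
    (hindep : iIndepFun
      (fun j ω => S ω j j) ℙ) :
    (∫ ω, frobSq (((l : ℝ) / b) • (Xᵀ * ((S ω)ᵀ * S ω) * (X * W - Y))
        - Xᵀ * (X * W - Y)) ∂ℙ)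
      ≤ ((l : ℝ) * ((l : ℝ) - b) / b) * (ζ ^ 2 * κ ^ 2) := by
  classical
  have hl : 0 < l := lt_of_lt_of_le hb hbl
  have hbR : (0:ℝ) < b := by exact_mod_cast hb
  have hlR : (0:ℝ) < l := by exact_mod_cast hl
  set E : Matrix (Fin l) (Fin o) ℝ := X * W - Y with hEdef
  set c : Fin l → Ω → ℝ := fun j ω => ((l:ℝ)/b) * S ω j j - 1 with hcdef
  set K : ℝ := ζ ^ 2 * κ ^ 2 with hKdef
  -- SᵀS is the diagonal matrix of diagonal entries
  have hSS : ∀ ω, (S ω)ᵀ * S ω = Matrix.diagonal (fun j => S ω j j) := by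
    intro ω
    ext j m
    rw [Matrix.mul_apply]
    rcases eq_or_ne j m with rfl | hjm
    · rw [Finset.sum_eq_single j]
      · simp only [Matrix.transpose_apply, Matrix.diagonal_apply_eq]
        rcases h01 ω j with h | h <;> simp [h]
      · intro r _ hr
        simp [Matrix.transpose_apply, hdiag ω r j hr]
      · simp
    · rw [Matrix.diagonal_apply_ne _ hjm]
      apply Finset.sum_eq_zero
      intro r _
      rcases eq_or_ne r j with rfl | hrj
      · simp [hdiag ω r m hjm]
      · simp [Matrix.transpose_apply, hdiag ω r j hrj]
  -- entrywise formula
  have hM : ∀ ω i k, (((l : ℝ) / b) • (Xᵀ * ((S ω)ᵀ * S ω) * E) - Xᵀ * E) i k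
      = ∑ j, (Xᵀ i j * E j k) * c j ω := by
    intro ω i k
    rw [hSS]
    have e1 : (Xᵀ * Matrix.diagonal (fun j => S ω j j) * E) i k
        = ∑ j, (Xᵀ i j * S ω j j) * E j k := by
      rw [Matrix.mul_apply]
      exact Finset.sum_congr rfl fun j _ => by rw [Matrix.mul_diagonal]
    have e2 : (Xᵀ * E) i k = ∑ j, Xᵀ i j * E j k := Matrix.mul_apply
    rw [Matrix.sub_apply, Matrix.smul_apply, e1, e2, smul_eq_mul, Finset.mul_sum,
      ← Finset.sum_sub_distrib]
    refine Finset.sum_congr rfl fun j _ => ?_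
    simp only [hcdef]
    ring
  have hEnn : (0:ℝ) ≤ frobSq E := frobSq_nonneg E
  have hAnn : (0:ℝ) ≤ frobSq Xᵀ := frobSq_nonneg Xᵀ
  have hζ2 : (0:ℝ) ≤ ζ ^ 2 := le_trans hAnn hX
  have hκ2 : (0:ℝ) ≤ κ ^ 2 := le_trans hEnn hXWY
  -- pointwise Cauchy-Schwarz bound
  have hpoint : ∀ ω, frobSq (((l : ℝ) / b) • (Xᵀ * ((S ω)ᵀ * S ω) * E) - Xᵀ * E)
      ≤ (∑ j, (c j ω) ^ 2) * K := by
    intro ω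
    have hCnn : (0:ℝ) ≤ ∑ j, (c j ω) ^ 2 := Finset.sum_nonneg fun _ _ => sq_nonneg _
    have h1 : frobSq (((l : ℝ) / b) • (Xᵀ * ((S ω)ᵀ * S ω) * E) - Xᵀ * E)
        = ∑ i, ∑ k, (∑ j, (Xᵀ i j * E j k) * c j ω) ^ 2 := by
      unfold frobSq
      exact Finset.sum_congr rfl fun i _ => Finset.sum_congr rfl fun k _ => by rw [hM]
    rw [h1]
    have h2 : ∀ i k, (∑ j, (Xᵀ i j * E j k) * c j ω) ^ 2
        ≤ (∑ j, (Xᵀ i j * E j k) ^ 2) * (∑ j, (c j ω) ^ 2) :=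
      fun i k => Finset.sum_mul_sq_le_sq_mul_sq _ _ _
    calc ∑ i, ∑ k, (∑ j, (Xᵀ i j * E j k) * c j ω) ^ 2
        ≤ ∑ i, ∑ k, (∑ j, (Xᵀ i j * E j k) ^ 2) * (∑ j, (c j ω) ^ 2) :=
          Finset.sum_le_sum fun i _ => Finset.sum_le_sum fun k _ => h2 i k
      _ = (∑ j, (∑ i, (Xᵀ i j) ^ 2) * (∑ k, (E j k) ^ 2)) * (∑ j, (c j ω) ^ 2) := by
          simp only [← Finset.sum_mul]
          congr 1
          have hswap : ∀ i : Fin d, ∑ k : Fin o, ∑ j : Fin l, (Xᵀ i j * E j k) ^ 2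
              = ∑ j : Fin l, ∑ k : Fin o, (Xᵀ i j * E j k) ^ 2 := fun i => Finset.sum_comm
          simp only [hswap]
          rw [Finset.sum_comm]
          refine Finset.sum_congr rfl fun j _ => ?_
          rw [Finset.sum_mul]
          refine Finset.sum_congr rfl fun i _ => ?_
          rw [Finset.mul_sum]
          exact Finset.sum_congr rfl fun k _ => mul_pow _ _ _
      _ ≤ (frobSq Xᵀ * frobSq E) * (∑ j, (c j ω) ^ 2) := by
          refine mul_le_mul_of_nonneg_right ?_ hCnn
          have hstep : ∀ j : Fin l, (∑ i, (Xᵀ i j) ^ 2) * (∑ k, (E j k) ^ 2)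
              ≤ (∑ i, (Xᵀ i j) ^ 2) * frobSq E := by
            intro j
            refine mul_le_mul_of_nonneg_left ?_ (Finset.sum_nonneg fun _ _ => sq_nonneg _)
            exact Finset.single_le_sum (f := fun j => ∑ k, (E j k) ^ 2)
              (fun j _ => Finset.sum_nonneg fun _ _ => sq_nonneg _) (Finset.mem_univ j)
          calc ∑ j, (∑ i, (Xᵀ i j) ^ 2) * (∑ k, (E j k) ^ 2)
              ≤ ∑ j, (∑ i, (Xᵀ i j) ^ 2) * frobSq E := Finset.sum_le_sum fun j _ => hstep j
            _ = (∑ j, ∑ i, (Xᵀ i j) ^ 2) * frobSq E := by rw [Finset.sum_mul]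
            _ = frobSq Xᵀ * frobSq E := by rw [Finset.sum_comm]; rfl
      _ ≤ K * (∑ j, (c j ω) ^ 2) := by
          refine mul_le_mul_of_nonneg_right ?_ hCnn
          exact mul_le_mul hX hXWY hEnn hζ2
      _ = (∑ j, (c j ω) ^ 2) * K := mul_comm _ _
  -- integral of c j ^ 2
  have hAj : ∀ j, MeasurableSet {ω | S ω j j = 1} :=
    fun j => (hmeas j j) (measurableSet_singleton 1)
  set q2 : ℝ := ((l:ℝ)/b - 1) ^ 2 - 1 with hq2def
  have hcsq : ∀ j ω, (c j ω) ^ 2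
      = Set.indicator {ω | S ω j j = 1} (fun _ => q2) ω + 1 := by
    intro j ω
    rcases h01 ω j with h | h
    · have hnm : ω ∉ {ω | S ω j j = 1} := by simp [h]
      simp [Set.indicator_of_notMem hnm, hcdef, h]
    · have hm : ω ∈ {ω | S ω j j = 1} := h
      simp only [Set.indicator_of_mem hm, hcdef, h, hq2def, mul_one]
      ring
  have hint : ∀ j, Integrable (fun ω => (c j ω) ^ 2) ℙ := by
    intro j
    have : (fun ω => (c j ω) ^ 2)
        = fun ω => Set.indicator {ω | S ω j j = 1} (fun _ => q2) ω + 1 := funext (hcsq j)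
    rw [this]
    exact ((integrable_const q2).indicator (hAj j)).add (integrable_const 1)
  have hintC : Integrable (fun ω => (∑ j, (c j ω) ^ 2) * K) ℙ :=
    (integrable_finset_sum _ fun j _ => hint j).mul_const K
  have hIcj : ∀ j, ∫ ω, (c j ω) ^ 2 ∂ℙ = ((l:ℝ) - b) / b := by
    intro j
    have hrw : (fun ω => (c j ω) ^ 2)
        = fun ω => Set.indicator {ω | S ω j j = 1} (fun _ => q2) ω + 1 := funext (hcsq j)
    rw [hrw, integral_add ((integrable_const q2).indicator (hAj j)) (integrable_const 1),
      integral_indicator_const _ (hAj j), integral_const, measureReal_def, hp j,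
      ENNReal.toReal_ofReal (by positivity)]
    simp only [measure_univ, probReal_univ, ENNReal.toReal_one, smul_eq_mul, one_mul, one_smul]
    rw [hq2def]
    field_simp
    ring
  have hIC : ∫ ω, (∑ j, (c j ω) ^ 2) * K ∂ℙ = ((l : ℝ) * ((l : ℝ) - b) / b) * K := by
    rw [integral_mul_const, integral_finset_sum _ fun j _ => hint j]
    simp only [hIcj, Finset.sum_const, Finset.card_univ, Fintype.card_fin, nsmul_eq_mul]
    rw [mul_div_assoc]
  calc (∫ ω, frobSq (((l : ℝ) / b) • (Xᵀ * ((S ω)ᵀ * S ω) * E) - Xᵀ * E) ∂ℙ)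
      ≤ ∫ ω, (∑ j, (c j ω) ^ 2) * K ∂ℙ :=
        integral_mono_of_nonneg (Filter.Eventually.of_forall fun ω => frobSq_nonneg _)
          hintC (Filter.Eventually.of_forall hpoint)
    _ = ((l : ℝ) * ((l : ℝ) - b) / b) * K := hIC
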